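/- arXiv:2201.07427 — 3 statements merged into one kernel-verified Lean document; each statement's English description precedes it below -/
import Mathlib

section
/- Let f : E → ℝ be L-smooth and μ-strongly convex with 0 < μ < L, set f̲ := f − (μ/2)‖·‖², and let f̲*(u) := sup_{x ∈ E} (⟨u, x⟩ − f̲(x)) be its convex conjugate. Fix ηx, ηu > 0, θ ≥ 0, and x₀ ∈ E. Define x̲_{−1} = x̲₀ = x₀, u_{−1} = u₀ = ∇f̲(x₀), and suppose that for every k ≥ 0: ũ_{k+1} := u_k + θ (u_k − u_{k−1}); x_{k+1} := (x_k − ηx ũ_{k+1})/(1 + ηx μ); u_{k+1} is a global minimizer of u ↦ −⟨x_{k+1}, u⟩ + f̲*(u) + (1/ηu)(f̲*(u) − f̲*(u_k) − ⟨x̲_k, u − u_k⟩) (with values in ℝ ∪ {+∞}); and x̲_{k+1} := (x̲_k + ηu x_{k+1})/(1 + ηu). Then u_k = ∇f̲(x̲_k) for every k ≥ −1; in particular, the x-iterates satisfy the gradient-based recursion x_{k+1} = (x_k − ηx (∇f̲(x̲_k) + θ(∇f̲(x̲_k) − ∇f̲(x̲_{k−1}))))/(1 + ηx μ) for all k ≥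 0. -/
open InnerProductSpace Set

/-- The convex conjugate g*(u) := sup_{x} (⟨u, x⟩ − g(x)), with values in ℝ ∪ {±∞}. -/
noncomputable def conj {E : Type*} [NormedAddCommGroup E] [InnerProductSpace ℝ E]
    (g : E → ℝ) (u : E) : EReal :=
  ⨆ x : E, (((inner ℝ u x : ℝ) - g x : ℝ) : EReal)

lemma grad_ineq {E : Type*} [NormedAddCommGroup E] [InnerProductSpace ℝ E] [CompleteSpace E]
    {g : E → ℝ} {gz z : E} (hg : HasGradientAt g gz z)
    (hcvx : ConvexOn ℝ Set.univ g) (y : E) :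
    (inner ℝ gz (y - z) : ℝ) + g z ≤ g y := by
  set d := y - z with hd
  have hc : HasDerivAt (fun t : ℝ => z + t • d) d 0 := by
    simpa using ((hasDerivAt_id (0:ℝ)).smul_const d).const_add z
  have hg' : HasFDerivAt g (toDual ℝ E gz) z := hg
  have hg'' : HasFDerivAt g (toDual ℝ E gz) ((fun t : ℝ => z + t • d) 0) := by
    simpa using hg'
  have hφ : HasDerivAt (fun t : ℝ => g (z + t • d)) ((inner ℝ gz d : ℝ)) 0 := by
    have := hg''.comp_hasDerivAt 0 hc
    simp at this
    exact this
  have hslope : Filter.Tendsto (slope (fun t : ℝ => g (z + t • d)) 0)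
      (nhdsWithin 0 (Set.Ioi 0)) (nhds ((inner ℝ gz d : ℝ))) :=
    ((hasDerivAt_iff_tendsto_slope).mp hφ).mono_left
      (nhdsWithin_mono 0 (fun t ht => by simpa using ne_of_gt ht))
  have hev : ∀ᶠ t in nhdsWithin (0:ℝ) (Set.Ioi 0),
      slope (fun t : ℝ => g (z + t • d)) 0 t ≤ g y - g z := by
    filter_upwards [Ioc_mem_nhdsGT_of_mem (by norm_num : (0:ℝ) ∈ Set.Ico 0 1)] with t ht
    have hcv := hcvx.2 (Set.mem_univ z) (Set.mem_univ y) (by linarith [ht.2] : (0:ℝ) ≤ 1 - t)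
      (le_of_lt ht.1) (by ring)
    have hpt : (1 - t) • z + t • y = z + t • d := by
      rw [hd]; module
    rw [hpt] at hcv
    simp only [smul_eq_mul] at hcv
    rw [slope_def_field]
    simp only [sub_zero, zero_smul, add_zero]
    rw [div_le_iff₀ ht.1]
    nlinarith [ht.1]
  have := le_of_tendsto hslope hev
  linarith [real_inner_comm gz d]

lemma conj_le {E : Type*} [NormedAddCommGroup E] [InnerProductSpace ℝ E]
    (g : E → ℝ) (u y : E) : (((inner ℝ u y : ℝ) - g y : ℝ) : EReal) ≤ conj g u :=
  le_iSup (fun x : E => (((inner ℝ u x : ℝ) - g x : ℝ) : EReal)) y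

lemma conj_grad {E : Type*} [NormedAddCommGroup E] [InnerProductSpace ℝ E] [CompleteSpace E]
    {g : E → ℝ} {g' : E → E} (hg : ∀ x, HasGradientAt g (g' x) x)
    (hcvx : ConvexOn ℝ Set.univ g) (z : E) :
    conj g (g' z) = (((inner ℝ (g' z) z : ℝ) - g z : ℝ) : EReal) := by
  refine le_antisymm (iSup_le fun y => ?_) (conj_le g (g' z) z)
  have h : (inner ℝ (g' z) (y - z) : ℝ) + g z ≤ g y := grad_ineq (hg z) hcvx y
  rw [inner_sub_right] at h
  exact_mod_cast EReal.coe_le_coe_iff.mpr (by linarith)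

lemma step_aux {E : Type*} [NormedAddCommGroup E] [InnerProductSpace ℝ E] [CompleteSpace E]
    (lf : E → ℝ) (lf' : E → E) (hlfgrad : ∀ x, HasGradientAt lf (lf' x) x)
    (hcvx : ConvexOn ℝ Set.univ lf) (ηu : ℝ) (hηu : 0 < ηu)
    (x1 xk un u1 : E)
    (IH : un = lf' xk)
    (hmin : ∀ w : E,
      ((-(inner ℝ x1 u1 : ℝ) : ℝ) : EReal) + conj lf u1
          + (((1 / ηu : ℝ)) : EReal) * (conj lf u1 - conj lf un
              - (((inner ℝ xk (u1 - un) : ℝ)) : EReal))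
        ≤ ((-(inner ℝ x1 w : ℝ) : ℝ) : EReal) + conj lf w
          + (((1 / ηu : ℝ)) : EReal) * (conj lf w - conj lf un
              - (((inner ℝ xk (w - un) : ℝ)) : EReal)))
    (xb : E) (hxb : xb = (1 + ηu)⁻¹ • (xk + ηu • x1)) :
    u1 = lf' xb := by
  have h1ηu : (0:ℝ) < 1 + ηu := by linarith
  have hxbe : (1 + ηu) • xb = xk + ηu • x1 := by
    rw [hxb, smul_smul, mul_inv_cancel₀ (ne_of_gt h1ηu), one_smul]
  set v := lf' xb with hv
  have hck : conj lf un = (((inner ℝ un xk : ℝ) - lf xk : ℝ) : EReal) := by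
    rw [IH]; exact conj_grad hlfgrad hcvx xk
  have hcv : conj lf v = (((inner ℝ v xb : ℝ) - lf xb : ℝ) : EReal) := conj_grad hlfgrad hcvx xb
  set ck : ℝ := (inner ℝ un xk : ℝ) - lf xk
  set cv : ℝ := (inner ℝ v xb : ℝ) - lf xb
  have hbot : (((inner ℝ u1 (0:E) : ℝ) - lf 0 : ℝ) : EReal) ≤ conj lf u1 := conj_le lf u1 0
  have hne_bot : conj lf u1 ≠ ⊥ := fun h => by simp [h] at hbot
  have hne_top : conj lf u1 ≠ ⊤ := by
    intro hT
    have := hmin v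
    rw [hT, hck, hcv] at this
    rw [EReal.top_sub_coe, EReal.top_sub_coe, EReal.coe_mul_top_of_pos (by positivity),
      EReal.coe_add_top, EReal.top_add_top] at this
    have h2 : ((-(inner ℝ x1 v : ℝ) : ℝ) : EReal) + (cv : EReal)
        + ((1 / ηu : ℝ) : EReal) * ((cv : EReal) - (ck : EReal) - ((inner ℝ xk (v - un) : ℝ) : EReal))
        = (((-(inner ℝ x1 v : ℝ)) + cv + (1 / ηu) * (cv - ck - (inner ℝ xk (v - un) : ℝ)) : ℝ) : EReal) := by
      push_cast; ring
    rw [h2] at this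
    exact (EReal.coe_ne_top _) (top_le_iff.mp this)
  obtain ⟨a, ha⟩ : ∃ a : ℝ, conj lf u1 = (a : EReal) := by
    lift conj lf u1 to ℝ using ⟨hne_top, hne_bot⟩ with a
    exact ⟨a, rfl⟩
  have hreal : -(inner ℝ x1 u1 : ℝ) + a + (1 / ηu) * (a - ck - (inner ℝ xk (u1 - un) : ℝ))
      ≤ -(inner ℝ x1 v : ℝ) + cv + (1 / ηu) * (cv - ck - (inner ℝ xk (v - un) : ℝ)) := by
    have := hmin v
    rw [ha, hck, hcv] at this
    exact_mod_cast this
  have hi1 : (inner ℝ xk u1 : ℝ) + ηu * (inner ℝ x1 u1 : ℝ) = (1 + ηu) * (inner ℝ xb u1 : ℝ) := by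
    have := congrArg (fun z : E => (inner ℝ z u1 : ℝ)) hxbe
    simpa [inner_add_left, real_inner_smul_left] using this.symm
  have hi2 : (inner ℝ xk v : ℝ) + ηu * (inner ℝ x1 v : ℝ) = (1 + ηu) * (inner ℝ xb v : ℝ) := by
    have := congrArg (fun z : E => (inner ℝ z v : ℝ)) hxbe
    simpa [inner_add_left, real_inner_smul_left] using this.symm
  have hs1 : (inner ℝ xk (u1 - un) : ℝ) = (inner ℝ xk u1 : ℝ) - (inner ℝ xk un : ℝ) := inner_sub_right _ _ _
  have hs2 : (inner ℝ xk (v - un) : ℝ) = (inner ℝ xk v : ℝ) - (inner ℝ xk un : ℝ) := inner_sub_right _ _ _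
  have hcomm1 : (inner ℝ xb u1 : ℝ) = (inner ℝ u1 xb : ℝ) := real_inner_comm _ _
  have hcomm2 : (inner ℝ xb v : ℝ) = (inner ℝ v xb : ℝ) := real_inner_comm _ _
  have hηinv : ηu * (1 / ηu) = 1 := mul_one_div_cancel (ne_of_gt hηu)
  have hck' : ck = (inner ℝ un xk : ℝ) - lf xk := rfl
  have hcv' : cv = (inner ℝ v xb : ℝ) - lf xb := rfl
  have hkey : a ≤ (inner ℝ u1 xb : ℝ) - lf xb := by
    rw [div_mul_eq_mul_div, div_mul_eq_mul_div] at hreal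
    rw [add_div' _ _ _ (ne_of_gt hηu), add_div' _ _ _ (ne_of_gt hηu),
      div_le_div_iff₀ hηu hηu] at hreal
    have key2 : (1 + ηu) * (a - (inner ℝ xb u1 : ℝ)) ≤ (1 + ηu) * (cv - (inner ℝ xb v : ℝ)) := by
      nlinarith [hreal, hi1, hi2, hs1, hs2, hηu]
    have key3 : a - (inner ℝ xb u1 : ℝ) ≤ cv - (inner ℝ xb v : ℝ) :=
      le_of_mul_le_mul_left key2 h1ηu
    rw [hcv', hcomm2] at key3
    linarith [hcomm1, key3]
  have hfy : (inner ℝ u1 xb : ℝ) - lf xb ≤ a := by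
    have := conj_le lf u1 xb
    rw [ha] at this
    exact_mod_cast this
  have haeq : a = (inner ℝ u1 xb : ℝ) - lf xb := le_antisymm hkey hfy
  have hmax : IsMaxOn (fun y : E => (inner ℝ u1 y : ℝ) - lf y) Set.univ xb := by
    intro y _
    have := conj_le lf u1 y
    rw [ha] at this
    have : (inner ℝ u1 y : ℝ) - lf y ≤ a := by exact_mod_cast this
    simpa [haeq] using this
  have hfd : HasFDerivAt (fun y : E => (inner ℝ u1 y : ℝ) - lf y)
      (toDual ℝ E u1 - toDual ℝ E (lf' xb)) xb := by
    have h1 : HasFDerivAt (fun y : E => (toDual ℝ E u1) y) (toDual ℝ E u1) xb :=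
      (toDual ℝ E u1).hasFDerivAt
    have h2 : HasFDerivAt lf (toDual ℝ E (lf' xb)) xb := hlfgrad xb
    have := h1.sub h2
    simp only [toDual_apply_apply] at this
    exact this
  have hzero : toDual ℝ E u1 - toDual ℝ E (lf' xb) = 0 :=
    (hmax.isLocalMax Filter.univ_mem).hasFDerivAt_eq_zero hfd
  have : toDual ℝ E (u1 - lf' xb) = 0 := by rw [map_sub]; exact hzero
  have := (toDual ℝ E).map_eq_zero_iff.mp this
  rw [sub_eq_zero] at this
  exact this

/-- equivalence of the primal–dual update (with Bregman proximal step on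
the conjugate f̲*) and the gradient-based AGD-like recursion. Sequences are over ℕ;
indices k−1 use truncated subtraction at k = 0, encoding x̲₋₁ = x̲₀ and u₋₁ = u₀. -/
theorem stmt5 {E : Type*} [NormedAddCommGroup E] [InnerProductSpace ℝ E] [CompleteSpace E]
    (L μ : ℝ) (hμ : 0 < μ) (hμL : μ < L)
    (f : E → ℝ) (f' : E → E)
    (hgrad : ∀ x, HasGradientAt f (f' x) x)
    (hlip : ∀ x y, ‖f' x - f' y‖ ≤ L * ‖x - y‖)
    (hsc : ConvexOn ℝ Set.univ (fun x => f x - μ / 2 * ‖x‖ ^ 2))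
    -- f̲ := f − (μ/2)‖·‖² and its gradient
    (lf : E → ℝ) (hlf : lf = fun x => f x - μ / 2 * ‖x‖ ^ 2)
    (lf' : E → E) (hlf' : lf' = fun x => f' x - μ • x)
    (hlfgrad : ∀ x, HasGradientAt lf (lf' x) x)
    (ηx ηu θ : ℝ) (hηx : 0 < ηx) (hηu : 0 < ηu) (hθ : 0 ≤ θ)
    (x₀ : E) (x u xl : ℕ → E)
    (hx0 : x 0 = x₀) (hxl0 : xl 0 = x₀) (hu0 : u 0 = lf' x₀)
    -- the primal–dual update rule
    (hxupd : ∀ k : ℕ,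
      x (k + 1) = (1 + ηx * μ)⁻¹ •
        (x k - ηx • (u k + θ • (u k - u (k - 1)))))
    (humin : ∀ k : ℕ, ∀ w : E,
      ((-(inner ℝ (x (k + 1)) (u (k + 1))) : ℝ) : EReal) + conj lf (u (k + 1))
          + (((1 / ηu : ℝ)) : EReal) * (conj lf (u (k + 1)) - conj lf (u k)
              - (((inner ℝ (xl k) (u (k + 1) - u k) : ℝ)) : EReal))
        ≤ ((-(inner ℝ (x (k + 1)) w) : ℝ) : EReal) + conj lf w
          + (((1 / ηu : ℝ)) : EReal) * (conj lf w - conj lf (u k)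
              - (((inner ℝ (xl k) (w - u k) : ℝ)) : EReal)))
    (hxlupd : ∀ k : ℕ, xl (k + 1) = (1 + ηu)⁻¹ • (xl k + ηu • x (k + 1))) :
    (∀ k : ℕ, u k = lf' (xl k)) ∧
    (∀ k : ℕ, x (k + 1) = (1 + ηx * μ)⁻¹ •
      (x k - ηx • (lf' (xl k) + θ • (lf' (xl k) - lf' (xl (k - 1)))))) := by
  have hcvx : ConvexOn ℝ Set.univ lf := hlf ▸ hsc
  have part1 : ∀ k : ℕ, u k = lf' (xl k) := by
    intro k
    induction k with
    | zero => rw [hu0, hxl0]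
    | succ k ih =>
      exact step_aux lf lf' hlfgrad hcvx ηu hηu (x (k+1)) (xl k) (u k) (u (k+1)) ih
        (humin k) (xl (k+1)) (hxlupd k)
  refine ⟨part1, fun k => ?_⟩
  rw [hxupd k, part1 k, part1 (k - 1)]
end

section
/- Let f : E → ℝ be convex and L-smooth with L > 0, and let f*(w) := sup_{z ∈ E} (⟨w, z⟩ − f(z)) be its convex conjugate. Let x, x₀ ∈ E and set u := ∇f(x), u₀ := ∇f(x₀). Then f*(u) and f*(u₀) are finite, and (1/(2L)) ‖u − u₀‖² ≤ f*(u) − f*(u₀) − ⟨x₀, u − u₀⟩ = f(x₀) − f(x) − ⟨∇f(x), x₀ − x⟩ ≤ (L/2) ‖x − x₀‖². -/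
section Aux
open InnerProductSpace Set intervalIntegral
variable {E : Type*} [NormedAddCommGroup E] [InnerProductSpace ℝ E] [CompleteSpace E]

-- derivative along a line
lemma line_deriv (f : E → ℝ) (f' : E → E) (hgrad : ∀ x, HasGradientAt f (f' x) x)
    (a v : E) (t : ℝ) :
    HasDerivAt (fun s : ℝ => f (a + s • v)) (inner ℝ (f' (a + t • v)) v : ℝ) t := by
  have h1 : HasDerivAt (fun s : ℝ => a + s • v) v t :=
    by simpa using ((hasDerivAt_id t).smul_const v).const_add a
  have h2 := (hgrad (a + t • v)).hasFDerivAt.comp_hasDerivAt t h1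
  simpa [InnerProductSpace.toDual_apply_apply, Function.comp_def] using h2

-- gradient inequality for convex f
lemma grad_ineq_s13 (f : E → ℝ) (f' : E → E) (hconv : ConvexOn ℝ Set.univ f)
    (hgrad : ∀ x, HasGradientAt f (f' x) x) (a b : E) :
    f a + inner ℝ (f' a) (b - a) ≤ f b := by
  have hg : ConvexOn ℝ Set.univ (fun s : ℝ => f (a + s • (b - a))) := by
    have h := hconv.comp_affineMap (AffineMap.lineMap a b)
    have heq : (fun s : ℝ => f (a + s • (b - a))) = f ∘ (AffineMap.lineMap a b) := by
      funext s
      simp [AffineMap.lineMap_apply]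
      rw [add_comm]
    rw [heq]
    simpa using h
  have hd : HasDerivAt (fun s : ℝ => f (a + s • (b - a))) (inner ℝ (f' a) (b - a) : ℝ) 0 := by
    simpa using line_deriv f f' hgrad a (b - a) 0
  have hs := hg.le_slope_of_hasDerivWithinAt_Ioi (mem_univ (0:ℝ)) (mem_univ (1:ℝ))
    one_pos (hd.hasDerivWithinAt)
  simp [slope_def_field] at hs
  linarith

-- descent lemma
lemma descent (L : ℝ) (hL : 0 < L) (f : E → ℝ) (f' : E → E)
    (hgrad : ∀ x, HasGradientAt f (f' x) x)
    (hlip : ∀ x y, ‖f' x - f' y‖ ≤ L * ‖x - y‖) (a v : E) :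
    f (a + v) ≤ f a + inner ℝ (f' a) v + L / 2 * ‖v‖ ^ 2 := by
  have hcontf' : Continuous f' := by
    have : LipschitzWith (Real.toNNReal L) f' := by
      apply LipschitzWith.of_dist_le_mul
      intro p q
      rw [Real.coe_toNNReal _ hL.le, dist_eq_norm, dist_eq_norm]
      exact hlip p q
    exact this.continuous
  set g' : ℝ → ℝ := fun t => (inner ℝ (f' (a + t • v)) v : ℝ) with hg'
  have hcont : Continuous g' := by
    apply Continuous.inner
    · exact hcontf'.comp (by continuity)
    · exact continuous_const
  have hderiv : ∀ t ∈ Set.uIcc (0:ℝ) 1, HasDerivAt (fun s : ℝ => f (a + s • v)) (g' t) t :=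
    fun t _ => line_deriv f f' hgrad a v t
  have hint : IntervalIntegrable g' MeasureTheory.volume 0 1 := hcont.intervalIntegrable 0 1
  have key : f (a + v) - f a = ∫ t in (0:ℝ)..1, g' t := by
    have := intervalIntegral.integral_eq_sub_of_hasDerivAt hderiv hint
    simpa using this.symm
  have hmono : (∫ t in (0:ℝ)..1, g' t) ≤ ∫ t in (0:ℝ)..1,
      ((inner ℝ (f' a) v : ℝ) + L * t * ‖v‖ ^ 2) := by
    apply intervalIntegral.integral_mono_on zero_le_one hint
    · apply IntervalIntegrable.add intervalIntegrable_const
      exact (Continuous.intervalIntegrable (by continuity) 0 1)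
    · intro t ht
      have h1 : g' t - (inner ℝ (f' a) v : ℝ) = (inner ℝ (f' (a + t • v) - f' a) v : ℝ) := by
        rw [inner_sub_left]
      have h2 : (inner ℝ (f' (a + t • v) - f' a) v : ℝ) ≤ L * t * ‖v‖ ^ 2 := by
        calc (inner ℝ (f' (a + t • v) - f' a) v : ℝ) ≤ ‖f' (a + t • v) - f' a‖ * ‖v‖ :=
              real_inner_le_norm _ _
          _ ≤ (L * ‖(a + t • v) - a‖) * ‖v‖ :=
              mul_le_mul_of_nonneg_right (hlip _ _) (norm_nonneg _)
          _ = L * t * ‖v‖ ^ 2 := by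
              rw [add_sub_cancel_left, norm_smul, Real.norm_eq_abs, abs_of_nonneg ht.1]
              ring
      linarith
  have hval : (∫ t in (0:ℝ)..1, ((inner ℝ (f' a) v : ℝ) + L * t * ‖v‖ ^ 2))
      = (inner ℝ (f' a) v : ℝ) + L / 2 * ‖v‖ ^ 2 := by
    rw [intervalIntegral.integral_add intervalIntegrable_const
      (Continuous.intervalIntegrable (by continuity) 0 1)]
    have h3 : (∫ t in (0:ℝ)..1, L * t * ‖v‖ ^ 2) = L / 2 * ‖v‖ ^ 2 := by
      have he : (fun t : ℝ => L * t * ‖v‖ ^ 2) = fun t : ℝ => (L * ‖v‖ ^ 2) * t := by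
        funext t; ring
      rw [he, intervalIntegral.integral_const_mul, integral_id]; ring
    rw [h3]; simp
  linarith [key, hmono, hval.le, hval.ge]

lemma conj_eq (f : E → ℝ) (f' : E → E) (hconv : ConvexOn ℝ Set.univ f)
    (hgrad : ∀ x, HasGradientAt f (f' x) x) (a : E) :
    conj f (f' a) = (((inner ℝ (f' a) a : ℝ) - f a : ℝ) : EReal) := by
  apply le_antisymm
  · apply iSup_le
    intro z
    rw [EReal.coe_le_coe_iff]
    have := grad_ineq_s13 f f' hconv hgrad a z
    rw [inner_sub_right] at this
    linarith
  · exact le_iSup (fun z : E => (((inner ℝ (f' a) z : ℝ) - f z : ℝ) : EReal)) a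

lemma cocoercive (L : ℝ) (hL : 0 < L) (f : E → ℝ) (f' : E → E)
    (hconv : ConvexOn ℝ Set.univ f)
    (hgrad : ∀ x, HasGradientAt f (f' x) x)
    (hlip : ∀ x y, ‖f' x - f' y‖ ≤ L * ‖x - y‖) (x x₀ : E) :
    1 / (2 * L) * ‖f' x - f' x₀‖ ^ 2 ≤ f x₀ - f x - (inner ℝ (f' x) (x₀ - x) : ℝ) := by
  set d := f' x₀ - f' x with hd
  have hdesc := descent L hL f f' hgrad hlip x₀ (-(1/L) • d)
  have hgi := grad_ineq_s13 f f' hconv hgrad x (x₀ + (-(1/L) • d))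
  have e1 : (inner ℝ (f' x₀) (-(1/L) • d) : ℝ) = -(1/L) * (inner ℝ (f' x₀) d : ℝ) :=
    real_inner_smul_right _ _ _
  have e2 : ‖(-(1/L) • d)‖ ^ 2 = (1/L)^2 * ‖d‖ ^ 2 := by
    rw [norm_smul, Real.norm_eq_abs, mul_pow, sq_abs]
    congr 1
    rw [neg_pow]
    ring
  have e3 : (inner ℝ (f' x) ((x₀ + -(1/L) • d) - x) : ℝ)
      = (inner ℝ (f' x) (x₀ - x) : ℝ) + -(1/L) * (inner ℝ (f' x) d : ℝ) := by
    have : (x₀ + -(1/L) • d) - x = (x₀ - x) + -(1/L) • d := by abel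
    rw [this, inner_add_right, real_inner_smul_right]
  have e4 : (inner ℝ (f' x₀) d : ℝ) - (inner ℝ (f' x) d : ℝ) = ‖d‖ ^ 2 := by
    rw [← inner_sub_left, ← hd, real_inner_self_eq_norm_sq]
  have e5 : ‖f' x - f' x₀‖ = ‖d‖ := by rw [hd, norm_sub_rev]
  rw [e1, e2] at hdesc
  rw [e3] at hgi
  rw [e5]
  have hLne : L ≠ 0 := hL.ne'
  have h6 : L/2 * ((1/L)^2 * ‖d‖ ^ 2) = 1/(2*L) * ‖d‖ ^ 2 := by
    field_simp
  have h7 : (1/L) * ‖d‖ ^ 2 - 1/(2*L) * ‖d‖ ^ 2 = 1/(2*L) * ‖d‖ ^ 2 := by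
    field_simp
    ring
  have h8 : (1/L) * (inner ℝ (f' x₀) d : ℝ) - (1/L) * (inner ℝ (f' x) d : ℝ) = (1/L) * ‖d‖ ^ 2 := by
    rw [← mul_sub, e4]
  linarith
end Aux

/-- for a convex L-smooth f, with u = ∇f(x), u₀ = ∇f(x₀),
f*(u), f*(u₀) are finite and
(1/(2L))‖u − u₀‖² ≤ f*(u) − f*(u₀) − ⟨x₀, u − u₀⟩
  = f(x₀) − f(x) − ⟨∇f(x), x₀ − x⟩ ≤ (L/2)‖x − x₀‖². -/
theorem stmt13 {E : Type*} [NormedAddCommGroup E] [InnerProductSpace ℝ E] [CompleteSpace E]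
    (L : ℝ) (hL : 0 < L)
    (f : E → ℝ) (f' : E → E)
    (hconv : ConvexOn ℝ Set.univ f)
    (hgrad : ∀ x, HasGradientAt f (f' x) x)
    (hlip : ∀ x y, ‖f' x - f' y‖ ≤ L * ‖x - y‖)
    (x x₀ : E) (u u₀ : E) (hu : u = f' x) (hu₀ : u₀ = f' x₀) :
    conj f u ≠ ⊤ ∧ conj f u ≠ ⊥ ∧ conj f u₀ ≠ ⊤ ∧ conj f u₀ ≠ ⊥ ∧
    1 / (2 * L) * ‖u - u₀‖ ^ 2
      ≤ (conj f u).toReal - (conj f u₀).toReal - (inner ℝ x₀ (u - u₀) : ℝ) ∧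
    (conj f u).toReal - (conj f u₀).toReal - (inner ℝ x₀ (u - u₀) : ℝ)
      = f x₀ - f x - (inner ℝ (f' x) (x₀ - x) : ℝ) ∧
    f x₀ - f x - (inner ℝ (f' x) (x₀ - x) : ℝ) ≤ L / 2 * ‖x - x₀‖ ^ 2 := by
  subst hu hu₀
  have hcu := conj_eq f f' hconv hgrad x
  have hcu₀ := conj_eq f f' hconv hgrad x₀
  have hmid : (conj f (f' x)).toReal - (conj f (f' x₀)).toReal
      - (inner ℝ x₀ (f' x - f' x₀) : ℝ) = f x₀ - f x - (inner ℝ (f' x) (x₀ - x) : ℝ) := by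
    rw [hcu, hcu₀, EReal.toReal_coe, EReal.toReal_coe, inner_sub_right x₀ (f' x) (f' x₀),
      inner_sub_right (f' x) x₀ x, real_inner_comm x₀ (f' x), real_inner_comm x₀ (f' x₀)]
    ring
  refine ⟨by rw [hcu]; exact EReal.coe_ne_top _, by rw [hcu]; exact EReal.coe_ne_bot _,
    by rw [hcu₀]; exact EReal.coe_ne_top _, by rw [hcu₀]; exact EReal.coe_ne_bot _, ?_, hmid, ?_⟩
  · rw [hmid]
    exact cocoercive L hL f f' hconv hgrad hlip x x₀
  · have := descent L hL f f' hgrad hlip x (x₀ - x)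
    rw [add_sub_cancel] at this
    rw [norm_sub_rev x₀ x] at this
    linarith
end

section
/- Let r : E₁ → ℝ and s : E₂ → ℝ be differentiable and 1-strongly convex. Let F : E₁ → ℝ and H : E₂ → ℝ be convex functions admitting a subgradient at every point, with F relatively μx-strongly convex with respect to V^r and H relatively μy-strongly convex with respect to V^s, where μx, μy > 0. Let A : E₁ → E₂ be bounded linear, define φ(x,y) := F(x) + ⟨y, A x⟩ − H(y), and let (x*, y*) be a saddle point of φ on E₁ × E₂. Let ηx, ηy > 0, θ ≥ 0, αy > 0 satisfy θ ‖A‖/αy ≤ 1/ηx and ‖A‖ αy ≤ 1/ηy. Given points x_k ∈ E₁ and y_{k−1}, y_k ∈ E₂, set ỹ_{k+1} := y_k + θ (y_k − y_{k−1}), and suppose x_{k+1} is a global minimizer of x ↦ ⟨Aᵀ ỹ_{k+1}, x⟩ + (1/ηx) V^r_{x_k}(x) + F(x) and y_{k+1} is a global minimizer of y ↦ −⟨A x_{k+1}, y⟩ + (1/ηy) V^s_{y_k}(y) + H(y). Then: 0 ≤ φ(x_{k+1}, y*) − φ(x*, y_{k+1}) ≤ (1/ηx) V^r_{x_k}(x*)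 − (1/ηx + μx) V^r_{x_{k+1}}(x*) + (1/ηy) V^s_{y_k}(y*) − (1/ηy + μy) V^s_{y_{k+1}}(y*) + θ ⟨y_{k−1} − y_k, A(x_k − x*)⟩ − ⟨y_k − y_{k+1}, A(x_{k+1} − x*)⟩ + θ (‖A‖ αy/2) ‖y_k − y_{k−1}‖² − (‖A‖ αy/2) ‖y_{k+1} − y_k‖². -/
open InnerProductSpace Set Filter Topology

/-- Bregman divergence V^r_x(x') = r(x') − r(x) − ⟨∇r(x), x' − x⟩,
given a gradient function `r'` for `r`. -/
noncomputable def breg {E : Type*} [NormedAddCommGroup E] [InnerProductSpace ℝ E]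
    (r : E → ℝ) (r' : E → E) (x x' : E) : ℝ :=
  r x' - r x - (inner ℝ (r' x) (x' - x) : ℝ)

section aux
variable {E : Type*} [NormedAddCommGroup E] [InnerProductSpace ℝ E] [CompleteSpace E]

lemma lim_aux {φ : ℝ → ℝ} {L : ℝ} (h0 : φ 0 = 0) (hd : HasDerivAt φ L 0)
    (hpos : ∀ t ∈ Set.Ioc (0:ℝ) 1, 0 ≤ φ t) : 0 ≤ L := by
  have hslope := hasDerivAt_iff_tendsto_slope.mp hd
  have hsub : 𝓝[>] (0:ℝ) ≤ 𝓝[≠] (0:ℝ) :=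
    nhdsWithin_mono _ (fun t ht => ne_of_gt ht)
  have h2 : Tendsto (slope φ 0) (𝓝[>] (0:ℝ)) (𝓝 L) := hslope.mono_left hsub
  refine ge_of_tendsto h2 ?_
  filter_upwards [Ioo_mem_nhdsGT_of_mem (by norm_num : (0:ℝ) ∈ Ico 0 1)] with t ht
  have h1 : 0 ≤ φ t := hpos t ⟨ht.1, le_of_lt ht.2⟩
  have : slope φ 0 t = φ t / t := by simp [slope_def_field, h0]
  rw [this]
  exact div_nonneg h1 ht.1.le

/-- derivative of `t ↦ r (x + t • d)` at 0. -/
lemma line_hasDerivAt {r : E → ℝ} {g : E} {x : E} (hr : HasGradientAt r g x) (d : E) :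
    HasDerivAt (fun t : ℝ => r (x + t • d)) ((inner ℝ g d : ℝ)) 0 := by
  have hline : HasDerivAt (fun t : ℝ => x + t • d) d 0 := by
    simpa using ((hasDerivAt_id (0:ℝ)).smul_const d).const_add x
  have hF : HasFDerivAt r (toDual ℝ E g) (x + (0:ℝ) • d) := by
    simpa using hr.hasFDerivAt
  have := hF.comp_hasDerivAt (0:ℝ) hline
  simpa [toDual_apply_apply, Function.comp_def] using this

/-- derivative of `t ↦ breg r r' a (x + t • d)` at 0. -/
lemma breg_line_hasDerivAt {r : E → ℝ} {r' : E → E} (a x d : E)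
    (hr : HasGradientAt r (r' x) x) :
    HasDerivAt (fun t : ℝ => breg r r' a (x + t • d))
      ((inner ℝ (r' x) d : ℝ) - (inner ℝ (r' a) d : ℝ)) 0 := by
  have h1 := line_hasDerivAt hr d
  have h2 : HasDerivAt (fun t : ℝ => (inner ℝ (r' a) (x + t • d - a) : ℝ))
      ((inner ℝ (r' a) d : ℝ)) 0 := by
    have heq : (fun t : ℝ => (inner ℝ (r' a) (x + t • d - a) : ℝ))
        = fun t : ℝ => (inner ℝ (r' a) (x - a) : ℝ) + t * (inner ℝ (r' a) d : ℝ) := by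
      funext t
      rw [show x + t • d - a = (x - a) + t • d by abel]
      simp only [inner_add_right, real_inner_smul_right]
    rw [heq]
    simpa using (hasDerivAt_mul_const ((inner ℝ (r' a) d : ℝ))).const_add
      ((inner ℝ (r' a) (x - a) : ℝ))
  have := (h1.sub_const (r a)).sub h2
  simpa [breg, Pi.sub_def] using this

/-- three-point identity. -/
lemma three_point (r : E → ℝ) (r' : E → E) (a b z : E) :
    (inner ℝ (r' b - r' a) (z - b) : ℝ)
      = breg r r' a z - breg r r' a b - breg r r' b z := by
  simp [breg, inner_sub_left, inner_sub_right]
  ring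

/-- 1-strong convexity lower bound for the Bregman divergence. -/
lemma breg_lower {r : E → ℝ} {r' : E → E} (hrgrad : ∀ x, HasGradientAt r (r' x) x)
    (hrsc : ConvexOn ℝ Set.univ (fun x => r x - 1 / 2 * ‖x‖ ^ 2)) (x x' : E) :
    1 / 2 * ‖x' - x‖ ^ 2 ≤ breg r r' x x' := by
  set d := x' - x with hd
  set f : E → ℝ := fun u => r u - 1 / 2 * ‖u‖ ^ 2 with hf
  -- derivative of t ↦ 1/2 ‖x + t d‖²
  have hnorm : HasDerivAt (fun t : ℝ => 1 / 2 * ‖x + t • d‖ ^ 2) ((inner ℝ x d : ℝ)) 0 := by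
    have heq : (fun t : ℝ => 1 / 2 * ‖x + t • d‖ ^ 2)
        = fun t : ℝ => 1 / 2 * ‖x‖ ^ 2 + t * (inner ℝ x d : ℝ) + t ^ 2 * (1 / 2 * ‖d‖ ^ 2) := by
      funext t
      rw [norm_add_sq_real, real_inner_smul_right, norm_smul]
      simp only [Real.norm_eq_abs, mul_pow, sq_abs]
      ring
    rw [heq]
    have ha : HasDerivAt (fun t : ℝ => 1 / 2 * ‖x‖ ^ 2 + t * (inner ℝ x d : ℝ))
        ((inner ℝ x d : ℝ)) 0 :=
      (hasDerivAt_mul_const _).const_add _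
    have hb : HasDerivAt (fun t : ℝ => t ^ 2 * (1 / 2 * ‖d‖ ^ 2)) 0 0 := by
      simpa using (hasDerivAt_pow 2 (0:ℝ)).mul_const (1 / 2 * ‖d‖ ^ 2)
    simpa [Pi.add_def] using ha.add hb
  have hfd : HasDerivAt (fun t : ℝ => f (x + t • d))
      ((inner ℝ (r' x) d : ℝ) - (inner ℝ x d : ℝ)) 0 :=
    (line_hasDerivAt (hrgrad x) d).sub hnorm
  -- convexity bound
  have key : 0 ≤ (f (x + d) - f x) - ((inner ℝ (r' x) d : ℝ) - (inner ℝ x d : ℝ)) := by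
    apply lim_aux (φ := fun t : ℝ => t * (f (x + d) - f x) - (f (x + t • d) - f x))
    · simp
    · simpa [Pi.sub_def] using (hasDerivAt_mul_const (f (x + d) - f x)).sub (hfd.sub_const (f x))
    · intro t ht
      have hcvx := hrsc.2 (mem_univ x) (mem_univ (x + d))
        (by linarith [ht.2] : (0:ℝ) ≤ 1 - t) ht.1.le (by ring)
      have hpt : (1 - t) • x + t • (x + d) = x + t • d := by module
      rw [hpt] at hcvx
      simp only [smul_eq_mul, hf] at hcvx ⊢
      linarith
  have hxd : x + d = x' := by simp [hd]
  rw [hxd] at key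
  simp only [hf] at key
  have hexp : ‖x' - x‖ ^ 2 = ‖x'‖ ^ 2 - 2 * (inner ℝ x x' : ℝ) + ‖x‖ ^ 2 := by
    rw [norm_sub_sq_real, real_inner_comm]
  have hinner : (inner ℝ x d : ℝ) = (inner ℝ x x' : ℝ) - ‖x‖ ^ 2 := by
    simp [hd, inner_sub_right, real_inner_self_eq_norm_sq]
  simp only [breg]
  rw [show x' - x = d from rfl]
  nlinarith [key, hexp, hinner]

/-- From minimality, first-order inequality for the prox step. -/
lemma key_subgrad {r : E → ℝ} {r' : E → E} (hrgrad : ∀ x, HasGradientAt r (r' x) x)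
    {F : E → ℝ} (hF : ConvexOn ℝ Set.univ F) (c : E) {η : ℝ} (hη : 0 < η) (xk xp : E)
    (hmin : ∀ z : E, (inner ℝ c xp : ℝ) + 1 / η * breg r r' xk xp + F xp
      ≤ (inner ℝ c z : ℝ) + 1 / η * breg r r' xk z + F z) (z : E) :
    0 ≤ F z - F xp + (inner ℝ c (z - xp) : ℝ)
      + 1 / η * (inner ℝ (r' xp - r' xk) (z - xp) : ℝ) := by
  set d := z - xp with hd
  apply lim_aux (φ := fun t : ℝ =>
    t * (F z - F xp + (inner ℝ c d : ℝ)) + 1 / η * (breg r r' xk (xp + t • d) - breg r r' xk xp))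
  · simp
  · have h1 : HasDerivAt (fun t : ℝ => t * (F z - F xp + (inner ℝ c d : ℝ)))
        (F z - F xp + (inner ℝ c d : ℝ)) 0 := hasDerivAt_mul_const _
    have h2 := ((breg_line_hasDerivAt xk xp d (hrgrad xp)).sub_const
      (breg r r' xk xp)).const_mul (1 / η)
    convert h1.add h2 using 1
    · rfl
    · rfl
    · rfl
    simp only [inner_sub_left]
    try ring
  · intro t ht
    have hmin' := hmin (xp + t • d)
    have hpt : (1 - t) • xp + t • z = xp + t • d := by simp [hd]; module
    have hcvx := hF.2 (mem_univ xp) (mem_univ z)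
      (by linarith [ht.2] : (0:ℝ) ≤ 1 - t) ht.1.le (by ring)
    rw [hpt] at hcvx
    have hin : (inner ℝ c (xp + t • d) : ℝ) = (inner ℝ c xp : ℝ) + t * (inner ℝ c d : ℝ) := by
      simp [inner_add_right, real_inner_smul_right]
    rw [hin] at hmin'
    simp only [smul_eq_mul] at hcvx
    linarith

/-- Key one-step inequality for a relative-strongly-convex prox step. -/
lemma step_ineq {r : E → ℝ} {r' : E → E} (hrgrad : ∀ x, HasGradientAt r (r' x) x)
    {F : E → ℝ} (hF : ConvexOn ℝ Set.univ F) {μ : ℝ}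
    (hrel : ∀ x x' : E, ∀ g : E, (∀ z, F x + (inner ℝ g (z - x) : ℝ) ≤ F z) →
      F x + (inner ℝ g (x' - x) : ℝ) + μ * breg r r' x x' ≤ F x')
    (c : E) {η : ℝ} (hη : 0 < η) (xk xp : E)
    (hmin : ∀ z : E, (inner ℝ c xp : ℝ) + 1 / η * breg r r' xk xp + F xp
      ≤ (inner ℝ c z : ℝ) + 1 / η * breg r r' xk z + F z) (z : E) :
    (inner ℝ c (xp - z) : ℝ) + F xp - F z
      ≤ 1 / η * breg r r' xk z - 1 / η * breg r r' xk xp - (1 / η + μ) * breg r r' xp z := by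
  set g : E := -(c + (1 / η) • (r' xp - r' xk)) with hg
  have hsub : ∀ w, F xp + (inner ℝ g (w - xp) : ℝ) ≤ F w := by
    intro w
    have h0 := key_subgrad hrgrad hF c hη xk xp hmin w
    have : (inner ℝ g (w - xp) : ℝ)
        = -(inner ℝ c (w - xp) : ℝ) - 1 / η * (inner ℝ (r' xp - r' xk) (w - xp) : ℝ) := by
      simp [hg, inner_add_left, real_inner_smul_left]
      ring
    rw [this]
    linarith
  have hFrel := hrel xp z g hsub
  have hgz : (inner ℝ g (z - xp) : ℝ)
      = -(inner ℝ c (z - xp) : ℝ) - 1 / η * (inner ℝ (r' xp - r' xk) (z - xp) : ℝ) := by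
    simp [hg, inner_add_left, real_inner_smul_left]
    ring
  rw [hgz] at hFrel
  have htp := three_point r r' xk xp z
  have hcz : (inner ℝ c (xp - z) : ℝ) = -(inner ℝ c (z - xp) : ℝ) := by
    rw [← inner_neg_right]; congr 1; abel
  rw [hcz]
  have h1η : 0 < 1 / η := by positivity
  nlinarith [hFrel, htp]

end aux

/-- one-step inequality for the primal–dual update with extrapolation. -/
theorem stmt18 {E₁ E₂ : Type*}
    [NormedAddCommGroup E₁] [InnerProductSpace ℝ E₁] [CompleteSpace E₁]
    [NormedAddCommGroup E₂] [InnerProductSpace ℝ E₂] [CompleteSpace E₂]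
    (r : E₁ → ℝ) (r' : E₁ → E₁) (s : E₂ → ℝ) (s' : E₂ → E₂)
    (hrgrad : ∀ x, HasGradientAt r (r' x) x)
    (hsgrad : ∀ y, HasGradientAt s (s' y) y)
    (hrsc : ConvexOn ℝ Set.univ (fun x => r x - 1 / 2 * ‖x‖ ^ 2))
    (hssc : ConvexOn ℝ Set.univ (fun y => s y - 1 / 2 * ‖y‖ ^ 2))
    (F : E₁ → ℝ) (H : E₂ → ℝ) (μx μy : ℝ) (hμx : 0 < μx) (hμy : 0 < μy)
    (hFconv : ConvexOn ℝ Set.univ F) (hHconv : ConvexOn ℝ Set.univ H)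
    (hFsub : ∀ x : E₁, ∃ g : E₁, ∀ z, F x + (inner ℝ g (z - x) : ℝ) ≤ F z)
    (hHsub : ∀ y : E₂, ∃ g : E₂, ∀ z, H y + (inner ℝ g (z - y) : ℝ) ≤ H z)
    (hFrel : ∀ x x' : E₁, ∀ g : E₁, (∀ z, F x + (inner ℝ g (z - x) : ℝ) ≤ F z) →
      F x + (inner ℝ g (x' - x) : ℝ) + μx * breg r r' x x' ≤ F x')
    (hHrel : ∀ y y' : E₂, ∀ g : E₂, (∀ z, H y + (inner ℝ g (z - y) : ℝ) ≤ H z) →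
      H y + (inner ℝ g (y' - y) : ℝ) + μy * breg s s' y y' ≤ H y')
    (A : E₁ →L[ℝ] E₂) (xstar : E₁) (ystar : E₂)
    (hsaddle : ∀ (x : E₁) (y : E₂),
      F xstar + (inner ℝ y (A xstar) : ℝ) - H y
          ≤ F xstar + (inner ℝ ystar (A xstar) : ℝ) - H ystar ∧
      F xstar + (inner ℝ ystar (A xstar) : ℝ) - H ystar
          ≤ F x + (inner ℝ ystar (A x) : ℝ) - H ystar)
    (ηx ηy θ αy : ℝ) (hηx : 0 < ηx) (hηy : 0 < ηy) (hθ : 0 ≤ θ) (hαy : 0 < αy)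
    (hcond1 : θ * ‖A‖ / αy ≤ 1 / ηx) (hcond2 : ‖A‖ * αy ≤ 1 / ηy)
    (xk : E₁) (ykm yk : E₂) (ytil : E₂) (hytil : ytil = yk + θ • (yk - ykm))
    (xkp : E₁) (ykp : E₂)
    (hxmin : ∀ z : E₁,
      (inner ℝ ((ContinuousLinearMap.adjoint A) ytil) xkp : ℝ)
          + 1 / ηx * breg r r' xk xkp + F xkp
        ≤ (inner ℝ ((ContinuousLinearMap.adjoint A) ytil) z : ℝ)
          + 1 / ηx * breg r r' xk z + F z)
    (hymin : ∀ w : E₂,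
      -(inner ℝ (A xkp) ykp : ℝ) + 1 / ηy * breg s s' yk ykp + H ykp
        ≤ -(inner ℝ (A xkp) w : ℝ) + 1 / ηy * breg s s' yk w + H w) :
    0 ≤ (F xkp + (inner ℝ ystar (A xkp) : ℝ) - H ystar)
        - (F xstar + (inner ℝ ykp (A xstar) : ℝ) - H ykp) ∧
    (F xkp + (inner ℝ ystar (A xkp) : ℝ) - H ystar)
        - (F xstar + (inner ℝ ykp (A xstar) : ℝ) - H ykp)
      ≤ 1 / ηx * breg r r' xk xstar - (1 / ηx + μx) * breg r r' xkp xstar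
        + 1 / ηy * breg s s' yk ystar - (1 / ηy + μy) * breg s s' ykp ystar
        + θ * (inner ℝ (ykm - yk) (A (xk - xstar)) : ℝ)
        - (inner ℝ (yk - ykp) (A (xkp - xstar)) : ℝ)
        + θ * (‖A‖ * αy / 2) * ‖yk - ykm‖ ^ 2
        - ‖A‖ * αy / 2 * ‖ykp - yk‖ ^ 2 := by
  constructor
  · obtain ⟨h1, h2⟩ := hsaddle xkp ykp
    linarith
  · -- x-step inequality
    have hxstep := step_ineq hrgrad hFconv hFrel ((ContinuousLinearMap.adjoint A) ytil)
      hηx xk xkp hxmin xstar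
    -- y-step inequality
    have hymin' : ∀ w : E₂,
        (inner ℝ (-(A xkp)) ykp : ℝ) + 1 / ηy * breg s s' yk ykp + H ykp
          ≤ (inner ℝ (-(A xkp)) w : ℝ) + 1 / ηy * breg s s' yk w + H w := by
      intro w
      simpa [inner_neg_left] using hymin w
    have hystep := step_ineq hsgrad hHconv hHrel (-(A xkp)) hηy yk ykp hymin' ystar
    -- adjoint rewrite
    have hadj : (inner ℝ ((ContinuousLinearMap.adjoint A) ytil) (xkp - xstar) : ℝ)
        = (inner ℝ ytil (A (xkp - xstar)) : ℝ) :=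
      ContinuousLinearMap.adjoint_inner_left A (xkp - xstar) ytil
    rw [hadj] at hxstep
    -- Young inequality for the extra cross term
    have hyoung : (inner ℝ (ykm - yk) (A (xkp - xk)) : ℝ)
        ≤ ‖A‖ * αy / 2 * ‖yk - ykm‖ ^ 2 + ‖A‖ / αy / 2 * ‖xkp - xk‖ ^ 2 := by
      have h1 : (inner ℝ (ykm - yk) (A (xkp - xk)) : ℝ) ≤ ‖ykm - yk‖ * ‖A (xkp - xk)‖ :=
        real_inner_le_norm _ _
      have h2 : ‖A (xkp - xk)‖ ≤ ‖A‖ * ‖xkp - xk‖ := A.le_opNorm _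
      have h3 : ‖ykm - yk‖ * ‖A (xkp - xk)‖ ≤ ‖ykm - yk‖ * (‖A‖ * ‖xkp - xk‖) :=
        mul_le_mul_of_nonneg_left h2 (norm_nonneg _)
      have h4 : ‖ykm - yk‖ = ‖yk - ykm‖ := norm_sub_rev _ _
      rw [h4] at h1 h3
      have h5 : ‖yk - ykm‖ * (‖A‖ * ‖xkp - xk‖)
          ≤ ‖A‖ * αy / 2 * ‖yk - ykm‖ ^ 2 + ‖A‖ / αy / 2 * ‖xkp - xk‖ ^ 2 := by
        have hsq := sq_nonneg (αy * ‖yk - ykm‖ - ‖xkp - xk‖)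
        have hAnn : (0:ℝ) ≤ ‖A‖ := norm_nonneg _
        have hkey : ‖A‖ * αy / 2 * ‖yk - ykm‖ ^ 2 + ‖A‖ / αy / 2 * ‖xkp - xk‖ ^ 2
            - ‖yk - ykm‖ * (‖A‖ * ‖xkp - xk‖)
            = ‖A‖ / αy / 2 * (αy * ‖yk - ykm‖ - ‖xkp - xk‖) ^ 2 := by
          field_simp
          ring
        have hnn : 0 ≤ ‖A‖ / αy / 2 * (αy * ‖yk - ykm‖ - ‖xkp - xk‖) ^ 2 := by positivity
        linarith [hkey, hnn]
      linarith
    have hyoungθ := mul_le_mul_of_nonneg_left hyoung hθ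
    -- Bregman lower bounds and step-size conditions
    have hbx := breg_lower hrgrad hrsc xk xkp
    have hby := breg_lower hsgrad hssc yk ykp
    have hnnx : (0:ℝ) ≤ 1 / 2 * ‖xkp - xk‖ ^ 2 := by positivity
    have hnny : (0:ℝ) ≤ 1 / 2 * ‖ykp - yk‖ ^ 2 := by positivity
    have hC : θ * ‖A‖ / αy * (1 / 2 * ‖xkp - xk‖ ^ 2) ≤ 1 / ηx * breg r r' xk xkp := by
      calc θ * ‖A‖ / αy * (1 / 2 * ‖xkp - xk‖ ^ 2)
          ≤ 1 / ηx * (1 / 2 * ‖xkp - xk‖ ^ 2) := mul_le_mul_of_nonneg_right hcond1 hnnx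
        _ ≤ 1 / ηx * breg r r' xk xkp :=
            mul_le_mul_of_nonneg_left hbx (by positivity)
    have hD : ‖A‖ * αy * (1 / 2 * ‖ykp - yk‖ ^ 2) ≤ 1 / ηy * breg s s' yk ykp := by
      calc ‖A‖ * αy * (1 / 2 * ‖ykp - yk‖ ^ 2)
          ≤ 1 / ηy * (1 / 2 * ‖ykp - yk‖ ^ 2) := mul_le_mul_of_nonneg_right hcond2 hnny
        _ ≤ 1 / ηy * breg s s' yk ykp :=
            mul_le_mul_of_nonneg_left hby (by positivity)
    -- orient inner products and expand everything into atomic inner products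
    have hcomm1 : (inner ℝ (A xkp) ykp : ℝ) = (inner ℝ ykp (A xkp) : ℝ) := real_inner_comm _ _
    have hcomm2 : (inner ℝ (A xkp) ystar : ℝ) = (inner ℝ ystar (A xkp) : ℝ) := real_inner_comm _ _
    simp only [hytil, map_sub, map_add, inner_sub_left, inner_sub_right, inner_add_left,
      inner_add_right, inner_neg_left, real_inner_smul_left, real_inner_smul_right]
      at hxstep hystep hyoungθ ⊢
    rw [hcomm1, hcomm2] at hystep
    ring_nf at hxstep hystep hyoungθ hC hD ⊢
    linarith [hxstep, hystep, hyoungθ, hC, hD]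
end
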